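/- arXiv:0704.1249 — 3 statements merged into one kernel-verified Lean document; each statement's English description precedes it below -/
import Mathlib

section
/- For each 1 ≤ i < n the sequence of R-modules 0 → S_i → S_{i+1} ⊕ S_{i−1} → S/(f_1⋯f_{i−1}f_{i+1}) → 0 is a short exact sequence, where the first map sends s to (f_{i+1}·s, −π(s)) (multiplication by f_{i+1} into S_{i+1} and minus the canonical projection onto S_{i−1}) and the second map sends (s,t) to π(s) + f_{i+1}·t (the canonical projection from S_{i+1} plus multiplication by f_{i+1} from S_{i−1}). -/
set_option synthInstance.maxHeartbeats 1000000
set_option maxHeartbeats 1000000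

/-- `S = k[[x,y]]`, the formal power series ring in two variables. -/
abbrev PSring (k : Type) [Field k] : Type := MvPowerSeries (Fin 2) k

/-- The maximal ideal `m = (x, y)` of `k[[x,y]]`. -/
noncomputable abbrev mxy (k : Type) [Field k] : Ideal (PSring k) :=
  Ideal.span {MvPowerSeries.X 0, MvPowerSeries.X 1}

/-- `R = S/(f₁ ⋯ f_n)`. -/
abbrev Rring (k : Type) [Field k] (n : ℕ) (f : ℕ → PSring k) : Type :=
  PSring k ⧸ Ideal.span {∏ j ∈ Finset.range n, f j}

/-- The canonical projection `S → R`. -/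
noncomputable abbrev toR (k : Type) [Field k] (n : ℕ) (f : ℕ → PSring k) :
    PSring k →+* Rring k n f :=
  Ideal.Quotient.mk (Ideal.span {∏ j ∈ Finset.range n, f j})

/-- For `a ∈ S`, the `R`-module `R/(ā)`, which is `S/(a)` when `f₁⋯f_n ∈ (a)`. -/
abbrev Qmod (k : Type) [Field k] (n : ℕ) (f : ℕ → PSring k) (a : PSring k) : Type :=
  Rring k n f ⧸ Ideal.span {toR k n f a}

/-- The class in `S/(a)` of an element `r : R`. -/
noncomputable abbrev qmk (k : Type) [Field k] (n : ℕ) (f : ℕ → PSring k)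
    (a : PSring k) (r : Rring k n f) : Qmod k n f a :=
  Ideal.Quotient.mk (Ideal.span {toR k n f a}) r

/-- `Sᵢ = S/(f₁ ⋯ fᵢ)` as an `R`-module (1-based index `i`;
in the 0-based function `f`, the mathematical `fᵢ` is `f (i-1)`). -/
abbrev Smod (k : Type) [Field k] (n : ℕ) (f : ℕ → PSring k) (i : ℕ) : Type :=
  Qmod k n f (∏ j ∈ Finset.range i, f j)

noncomputable def mulQ {R : Type} [CommRing R] (g a b : R)
    (h : g * a ∈ Ideal.span {b}) :
    (R ⧸ Ideal.span {a}) →ₗ[R] R ⧸ Ideal.span {b} :=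
  Submodule.liftQ _ ((Ideal.span {b}).mkQ ∘ₗ LinearMap.mulLeft R g) (by
    rw [Ideal.span_le, Set.singleton_subset_iff]
    simp only [SetLike.mem_coe, LinearMap.mem_ker, LinearMap.comp_apply,
      LinearMap.mulLeft_apply, Submodule.mkQ_apply, Submodule.Quotient.mk_eq_zero]
    exact h)

@[simp] lemma mulQ_mk {R : Type} [CommRing R] (g a b : R)
    (h : g * a ∈ Ideal.span {b}) (r : R) :
    mulQ g a b h (Ideal.Quotient.mk (Ideal.span {a}) r)
      = Ideal.Quotient.mk (Ideal.span {b}) (g * r) := rfl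

lemma mk_mem_span_mk {S : Type} [CommRing S] (F d s : S) (hdF : d ∣ F) :
    Ideal.Quotient.mk (Ideal.span {F}) s ∈
      Ideal.span {Ideal.Quotient.mk (Ideal.span {F}) d} ↔ d ∣ s := by
  constructor
  · intro h
    rw [Ideal.mem_span_singleton'] at h
    obtain ⟨r, hr⟩ := h
    obtain ⟨w, rfl⟩ := Ideal.Quotient.mk_surjective r
    rw [← map_mul, Ideal.Quotient.eq] at hr
    rw [Ideal.mem_span_singleton] at hr
    obtain ⟨u, hu⟩ := (dvd_trans hdF hr)
    exact ⟨w - u, by linear_combination -hu⟩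
  · rintro ⟨w, rfl⟩
    rw [map_mul]
    exact Ideal.mem_span_singleton'.mpr ⟨_, mul_comm _ _⟩
theorem statement3 (k : Type) [Field k] [Infinite k]
    (n : ℕ) (hn : 1 ≤ n) (f : ℕ → PSring k)
    (hmem : ∀ i < n, f i ∈ mxy k)
    (hirr : ∀ i < n, Irreducible (f i))
    (hdist : ∀ i < n, ∀ j < n, i ≠ j →
      (Ideal.span {f i} : Ideal (PSring k)) ≠ Ideal.span {f j})
    (i : ℕ) (hi1 : 1 ≤ i) (hi2 : i < n) :
    ∃ (α : Smod k n f i →ₗ[Rring k n f] Smod k n f (i + 1) × Smod k n f (i - 1))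
      (β : Smod k n f (i + 1) × Smod k n f (i - 1) →ₗ[Rring k n f]
        Qmod k n f ((∏ j ∈ Finset.range (i - 1), f j) * f i)),
      (∀ r : Rring k n f,
        α (qmk k n f (∏ j ∈ Finset.range i, f j) r) =
          (qmk k n f (∏ j ∈ Finset.range (i + 1), f j) (toR k n f (f i) * r),
           - qmk k n f (∏ j ∈ Finset.range (i - 1), f j) r)) ∧
      (∀ r r' : Rring k n f,
        β (qmk k n f (∏ j ∈ Finset.range (i + 1), f j) r,
           qmk k n f (∏ j ∈ Finset.range (i - 1), f j) r') =
          qmk k n f ((∏ j ∈ Finset.range (i - 1), f j) * f i) r +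
          qmk k n f ((∏ j ∈ Finset.range (i - 1), f j) * f i) (toR k n f (f i) * r')) ∧
      Function.Injective α ∧ Function.Surjective β ∧
      LinearMap.range α = LinearMap.ker β := by

  classical
  haveI : IsDomain (PSring k) := NoZeroDivisors.to_isDomain _
  have hb0 : f i ≠ 0 := (hirr i hi2).ne_zero
  have hPi : (∏ j ∈ Finset.range i, f j)
      = (∏ j ∈ Finset.range (i - 1), f j) * f (i - 1) := by
    have hi' : i = (i - 1) + 1 := by omega
    rw [hi', Finset.prod_range_succ]
    simp
  have hPi1 : (∏ j ∈ Finset.range (i + 1), f j)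
      = (∏ j ∈ Finset.range (i - 1), f j) * f (i - 1) * f i := by
    rw [Finset.prod_range_succ, hPi]
  have hF : (∏ j ∈ Finset.range n, f j)
      = (∏ j ∈ Finset.range (i + 1), f j) * (∏ j ∈ Finset.Ico (i + 1) n, f j) := by
    rw [Finset.prod_range_mul_prod_Ico f (show i + 1 ≤ n by omega)]
  have hdvd1 : (∏ j ∈ Finset.range i, f j) ∣ ∏ j ∈ Finset.range n, f j :=
    ⟨f i * ∏ j ∈ Finset.Ico (i + 1) n, f j, by rw [hF, hPi1, hPi]; ring⟩
  have hdvd2 : (∏ j ∈ Finset.range (i + 1), f j) ∣ ∏ j ∈ Finset.range n, f j :=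
    ⟨∏ j ∈ Finset.Ico (i + 1) n, f j, hF⟩
  have hdvd3 : (∏ j ∈ Finset.range (i - 1), f j) ∣ ∏ j ∈ Finset.range n, f j :=
    ⟨f (i - 1) * f i * ∏ j ∈ Finset.Ico (i + 1) n, f j, by rw [hF, hPi1]; ring⟩
  have hdvd4 : (∏ j ∈ Finset.range (i - 1), f j) * f i ∣ ∏ j ∈ Finset.range n, f j :=
    ⟨f (i - 1) * ∏ j ∈ Finset.Ico (i + 1) n, f j, by rw [hF, hPi1]; ring⟩
  have h1 : toR k n f (f i) * toR k n f (∏ j ∈ Finset.range i, f j)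
      ∈ Ideal.span {toR k n f (∏ j ∈ Finset.range (i + 1), f j)} :=
    Ideal.mem_span_singleton'.mpr ⟨1, by
      rw [one_mul, ← map_mul]; congr 1; rw [hPi1, hPi]; ring⟩
  have h2 : (1 : Rring k n f) * toR k n f (∏ j ∈ Finset.range i, f j)
      ∈ Ideal.span {toR k n f (∏ j ∈ Finset.range (i - 1), f j)} :=
    Ideal.mem_span_singleton'.mpr ⟨toR k n f (f (i - 1)), by
      rw [one_mul, ← map_mul]; congr 1; rw [hPi]; ring⟩
  have h3 : (1 : Rring k n f) * toR k n f (∏ j ∈ Finset.range (i + 1), f j)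
      ∈ Ideal.span {toR k n f ((∏ j ∈ Finset.range (i - 1), f j) * f i)} :=
    Ideal.mem_span_singleton'.mpr ⟨toR k n f (f (i - 1)), by
      rw [← map_mul]; congr 1; rw [hPi1]; ring⟩
  have h4 : toR k n f (f i) * toR k n f (∏ j ∈ Finset.range (i - 1), f j)
      ∈ Ideal.span {toR k n f ((∏ j ∈ Finset.range (i - 1), f j) * f i)} :=
    Ideal.mem_span_singleton'.mpr ⟨1, by rw [one_mul, ← map_mul]; congr 1; ring⟩
  refine ⟨(mulQ (toR k n f (f i)) _ _ h1).prod (-(mulQ 1 _ _ h2)),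
          (mulQ 1 _ _ h3).coprod (mulQ (toR k n f (f i)) _ _ h4),
          ?_, ?_, ?_, ?_, ?_⟩
  · intro r
    simp only [LinearMap.prod_apply, Function.prod, LinearMap.neg_apply, mulQ_mk, one_mul, qmk]
  · intro r r'
    simp only [LinearMap.coprod_apply, mulQ_mk, one_mul, qmk]
  · rw [injective_iff_map_eq_zero]
    intro x hx
    obtain ⟨r, rfl⟩ := Ideal.Quotient.mk_surjective x
    obtain ⟨s, rfl⟩ := Ideal.Quotient.mk_surjective r
    have h1' := congrArg Prod.fst hx
    simp only [LinearMap.prod_apply, Function.prod, mulQ_mk, Prod.fst_zero] at h1'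
    rw [← map_mul, Ideal.Quotient.eq_zero_iff_mem] at h1'
    obtain ⟨w, hw⟩ := (mk_mem_span_mk _ _ _ hdvd2).mp h1'
    have hsw : s = (∏ j ∈ Finset.range i, f j) * w := by
      apply mul_left_cancel₀ hb0
      rw [hw, hPi1, hPi]; ring
    rw [Ideal.Quotient.eq_zero_iff_mem]
    exact (mk_mem_span_mk _ _ _ hdvd1).mpr ⟨w, hsw⟩
  · intro y
    obtain ⟨r, rfl⟩ := Ideal.Quotient.mk_surjective y
    refine ⟨(Ideal.Quotient.mk _ r, 0), ?_⟩
    simp only [LinearMap.coprod_apply, mulQ_mk, one_mul, map_zero, add_zero]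
  · apply le_antisymm
    · rintro z ⟨x, rfl⟩
      obtain ⟨r, rfl⟩ := Ideal.Quotient.mk_surjective x
      simp only [LinearMap.mem_ker, LinearMap.coprod_apply, LinearMap.prod_apply,
        Function.prod, LinearMap.neg_apply, mulQ_mk, one_mul, map_neg, add_neg_cancel]
    · rintro ⟨u, v⟩ hz
      obtain ⟨r, rfl⟩ := Ideal.Quotient.mk_surjective u
      obtain ⟨s, rfl⟩ := Ideal.Quotient.mk_surjective r
      obtain ⟨r', rfl⟩ := Ideal.Quotient.mk_surjective v
      obtain ⟨t, rfl⟩ := Ideal.Quotient.mk_surjective r'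
      simp only [LinearMap.mem_ker, LinearMap.coprod_apply, mulQ_mk, one_mul] at hz
      have h0 : Ideal.Quotient.mk
          (Ideal.span {toR k n f ((∏ j ∈ Finset.range (i - 1), f j) * f i)})
          (toR k n f (s + f i * t)) = 0 := by
        rw [map_add, map_mul, map_add]
        exact hz
      rw [Ideal.Quotient.eq_zero_iff_mem] at h0
      obtain ⟨w, hw⟩ := (mk_mem_span_mk _ _ _ hdvd4).mp h0
      refine ⟨Ideal.Quotient.mk _
        (toR k n f ((∏ j ∈ Finset.range (i - 1), f j) * w - t)), ?_⟩
      simp only [LinearMap.prod_apply, Function.prod, LinearMap.neg_apply, mulQ_mk, one_mul,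
        Prod.mk.injEq]
      constructor
      · rw [← map_mul]
        congr 2
        linear_combination -hw
      · rw [← map_neg, ← map_neg (toR k n f)]
        rw [Ideal.Quotient.eq]
        rw [← map_sub]
        exact (mk_mem_span_mk _ _ _ hdvd3).mpr ⟨-w, by ring⟩
end

section
/- For each 1 ≤ i < n the sequence of R-modules 0 → S/(f_1⋯f_{i−1}f_{i+1}) → S_{i+1} ⊕ S_{i−1} → S_i → 0 is a short exact sequence, where the first map sends u to (f_i·u, π(u)) (multiplication by f_i into S_{i+1} and the canonical projection onto S_{i−1}) and the second map sends (s,t) to −π(s) + f_i·t (minus the canonical projection from S_{i+1} plus multiplication by f_i from S_{i−1}). -/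
set_option synthInstance.maxHeartbeats 1000000
set_option maxHeartbeats 1000000

theorem aux_mem_span_iff {S : Type*} [CommRing S] {F a s : S} (h : a ∣ F) :
    Ideal.Quotient.mk (Ideal.span {F}) s ∈ Ideal.span {Ideal.Quotient.mk (Ideal.span {F}) a} ↔ a ∣ s := by
  constructor
  · intro hs
    rw [show Ideal.span {Ideal.Quotient.mk (Ideal.span {F}) a} =
        Ideal.map (Ideal.Quotient.mk (Ideal.span {F})) (Ideal.span {a}) by
      rw [Ideal.map_span, Set.image_singleton]] at hs
    have hc := Ideal.comap_map_of_surjective _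
      (Ideal.Quotient.mk_surjective (I := Ideal.span {F})) (Ideal.span {a})
    have hmem : s ∈ Ideal.span {a} ⊔
        Ideal.comap (Ideal.Quotient.mk (Ideal.span {F})) ⊥ := hc ▸ hs
    rw [← RingHom.ker_eq_comap_bot, Ideal.mk_ker,
      sup_eq_left.mpr (Ideal.span_singleton_le_span_singleton.mpr h)] at hmem
    exact Ideal.mem_span_singleton.mp hmem
  · rintro ⟨t, rfl⟩
    exact Ideal.mem_span_singleton.mpr ⟨_, by rw [_root_.map_mul]⟩

theorem helper_statement4 (k : Type) [Field k] [Infinite k]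
    (n : ℕ) (f : ℕ → PSring k)
    (hirr : ∀ i < n, Irreducible (f i))
    (m : ℕ) (hi2 : m + 1 < n) :
    ∃ (α : Qmod k n f ((∏ j ∈ Finset.range m, f j) * f (m+1)) →ₗ[Rring k n f]
        Qmod k n f (∏ j ∈ Finset.range (m+2), f j) × Qmod k n f (∏ j ∈ Finset.range m, f j))
      (β : Qmod k n f (∏ j ∈ Finset.range (m+2), f j) × Qmod k n f (∏ j ∈ Finset.range m, f j)
          →ₗ[Rring k n f] Qmod k n f (∏ j ∈ Finset.range (m+1), f j)),
      (∀ r : Rring k n f,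
        α (qmk k n f ((∏ j ∈ Finset.range m, f j) * f (m+1)) r) =
          (qmk k n f (∏ j ∈ Finset.range (m+2), f j) (toR k n f (f m) * r),
           qmk k n f (∏ j ∈ Finset.range m, f j) r)) ∧
      (∀ r r' : Rring k n f,
        β (qmk k n f (∏ j ∈ Finset.range (m+2), f j) r,
           qmk k n f (∏ j ∈ Finset.range m, f j) r') =
          - qmk k n f (∏ j ∈ Finset.range (m+1), f j) r +
          qmk k n f (∏ j ∈ Finset.range (m+1), f j) (toR k n f (f m) * r')) ∧
      Function.Injective α ∧ Function.Surjective β ∧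
      LinearMap.range α = LinearMap.ker β := by
  haveI : IsDomain (MvPowerSeries (Fin 2) k) := NoZeroDivisors.to_isDomain _
  have hgne : f m ≠ 0 := (hirr m (lt_trans (Nat.lt_succ_self m) hi2)).ne_zero
  set P : PSring k := ∏ j ∈ Finset.range m, f j with hP
  have hAe : (∏ j ∈ Finset.range (m+2), f j) = P * f m * f (m+1) := by
    rw [Finset.prod_range_succ, Finset.prod_range_succ]
  have hBe : (∏ j ∈ Finset.range (m+1), f j) = P * f m := Finset.prod_range_succ f m
  have hAF : (∏ j ∈ Finset.range (m+2), f j) ∣ ∏ j ∈ Finset.range n, f j :=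
    Finset.prod_dvd_prod_of_subset _ _ f (Finset.range_subset_range.mpr hi2)
  have hBF : (∏ j ∈ Finset.range (m+1), f j) ∣ ∏ j ∈ Finset.range n, f j :=
    Finset.prod_dvd_prod_of_subset _ _ f (Finset.range_subset_range.mpr (le_of_lt hi2))
  have h0F : P * f (m+1) ∣ ∏ j ∈ Finset.range n, f j :=
    dvd_trans ⟨f m, by rw [hAe]; ring⟩ hAF
  set I0 : Ideal (Rring k n f) := Ideal.span {toR k n f (P * f (m+1))} with hI0
  set IA : Ideal (Rring k n f) := Ideal.span {toR k n f (∏ j ∈ Finset.range (m+2), f j)} with hIA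
  set IP : Ideal (Rring k n f) := Ideal.span {toR k n f P} with hIP
  set IB : Ideal (Rring k n f) := Ideal.span {toR k n f (∏ j ∈ Finset.range (m+1), f j)} with hIB
  set g : Rring k n f := toR k n f (f m) with hg
  let gmul : Rring k n f →ₗ[Rring k n f] Rring k n f := g • LinearMap.id
  have hker0 : I0 ≤ LinearMap.ker (LinearMap.prod (IA.mkQ ∘ₗ gmul) IP.mkQ) := by
    rw [hI0, Ideal.span_le, Set.singleton_subset_iff]
    refine LinearMap.mem_ker.mpr (Prod.ext ?_ ?_)
    · show IA.mkQ (g • (toR k n f (P * f (m+1)))) = 0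
      rw [Submodule.mkQ_apply, Submodule.Quotient.mk_eq_zero, smul_eq_mul, hg, ← _root_.map_mul]
      exact (aux_mem_span_iff hAF).mpr ⟨1, by rw [hAe]; ring⟩
    · show IP.mkQ (toR k n f (P * f (m+1))) = 0
      rw [Submodule.mkQ_apply, Submodule.Quotient.mk_eq_zero]
      exact (aux_mem_span_iff (dvd_trans (Dvd.intro _ rfl) h0F)).mpr ⟨f (m+1), rfl⟩
  have hker1 : IA ≤ LinearMap.ker (-(IB.mkQ)) := by
    rw [hIA, Ideal.span_le, Set.singleton_subset_iff]
    refine LinearMap.mem_ker.mpr ?_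
    show -(IB.mkQ (toR k n f (∏ j ∈ Finset.range (m+2), f j))) = 0
    rw [Submodule.mkQ_apply, Submodule.Quotient.mk_eq_zero (p := IB) |>.mpr, neg_zero]
    exact (aux_mem_span_iff hBF).mpr ⟨f (m+1), by rw [hAe, hBe]⟩
  have hker2 : IP ≤ LinearMap.ker (IB.mkQ ∘ₗ gmul) := by
    rw [hIP, Ideal.span_le, Set.singleton_subset_iff]
    refine LinearMap.mem_ker.mpr ?_
    show IB.mkQ (g • toR k n f P) = 0
    rw [Submodule.mkQ_apply, Submodule.Quotient.mk_eq_zero, smul_eq_mul, hg, ← _root_.map_mul]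
    exact (aux_mem_span_iff hBF).mpr ⟨1, by rw [hBe]; ring⟩
  let α : Qmod k n f (P * f (m+1)) →ₗ[Rring k n f]
      Qmod k n f (∏ j ∈ Finset.range (m+2), f j) × Qmod k n f P :=
    Submodule.liftQ I0 (LinearMap.prod (IA.mkQ ∘ₗ gmul) IP.mkQ) hker0
  let β : Qmod k n f (∏ j ∈ Finset.range (m+2), f j) × Qmod k n f P →ₗ[Rring k n f]
      Qmod k n f (∏ j ∈ Finset.range (m+1), f j) :=
    LinearMap.coprod (Submodule.liftQ IA (-(IB.mkQ)) hker1)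
      (Submodule.liftQ IP (IB.mkQ ∘ₗ gmul) hker2)
  have hα : ∀ r : Rring k n f,
      α (qmk k n f (P * f (m+1)) r) =
        (qmk k n f (∏ j ∈ Finset.range (m+2), f j) (toR k n f (f m) * r),
         qmk k n f P r) := fun r => rfl
  have hβ : ∀ r r' : Rring k n f,
      β (qmk k n f (∏ j ∈ Finset.range (m+2), f j) r, qmk k n f P r') =
        - qmk k n f (∏ j ∈ Finset.range (m+1), f j) r +
        qmk k n f (∏ j ∈ Finset.range (m+1), f j) (toR k n f (f m) * r') := fun r r' => rfl
  have hPF : P ∣ ∏ j ∈ Finset.range n, f j := dvd_trans ⟨f (m+1), rfl⟩ h0F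
  refine ⟨α, β, hα, hβ, ?_, ?_, ?_⟩
  · rw [← LinearMap.ker_eq_bot]
    refine (Submodule.eq_bot_iff _).mpr fun x hx => ?_
    obtain ⟨r, rfl⟩ := Ideal.Quotient.mk_surjective x
    obtain ⟨s, rfl⟩ := Ideal.Quotient.mk_surjective r
    rw [LinearMap.mem_ker, hα] at hx
    have h1 : qmk k n f (∏ j ∈ Finset.range (m+2), f j) (toR k n f (f m) * toR k n f s) = 0 :=
      congrArg Prod.fst hx
    rw [← _root_.map_mul, Ideal.Quotient.eq_zero_iff_mem] at h1
    have h2 : (∏ j ∈ Finset.range (m+2), f j) ∣ f m * s := (aux_mem_span_iff hAF).mp h1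
    have h3 : f m * (P * f (m+1)) ∣ f m * s := by
      refine dvd_trans ⟨1, ?_⟩ h2; rw [hAe]; ring
    have h4 : P * f (m+1) ∣ s := (mul_dvd_mul_iff_left hgne).mp h3
    exact Ideal.Quotient.eq_zero_iff_mem.mpr ((aux_mem_span_iff h0F).mpr h4)
  · intro y
    obtain ⟨r, rfl⟩ := Ideal.Quotient.mk_surjective y
    refine ⟨(qmk k n f (∏ j ∈ Finset.range (m+2), f j) (-r), qmk k n f P 0), ?_⟩
    rw [hβ]
    simp
  · apply le_antisymm
    · rintro x hxr
      obtain ⟨z, rfl⟩ := LinearMap.mem_range.mp hxr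
      obtain ⟨r, rfl⟩ := Ideal.Quotient.mk_surjective z
      rw [LinearMap.mem_ker, hα, hβ]
      exact neg_add_cancel _
    · rintro ⟨x1, x2⟩ hx
      obtain ⟨r, rfl⟩ := Ideal.Quotient.mk_surjective x1
      obtain ⟨r', rfl⟩ := Ideal.Quotient.mk_surjective x2
      obtain ⟨s, rfl⟩ := Ideal.Quotient.mk_surjective r
      obtain ⟨t, rfl⟩ := Ideal.Quotient.mk_surjective r'
      rw [LinearMap.mem_ker, hβ] at hx
      rw [neg_add_eq_zero] at hx
      have h1 : toR k n f (f m * t - s) ∈ IB := by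
        have := Ideal.Quotient.eq.mp hx.symm
        rwa [← _root_.map_mul, ← map_sub] at this
      obtain ⟨w, hw⟩ : (∏ j ∈ Finset.range (m+1), f j) ∣ f m * t - s :=
        (aux_mem_span_iff hBF).mp h1
      rw [hBe] at hw
      set u : PSring k := t - P * w with hu
      have hsu : f m * u = s := by rw [hu]; linear_combination hw
      refine LinearMap.mem_range.mpr ⟨qmk k n f (P * f (m+1)) (toR k n f u), ?_⟩
      rw [hα]
      refine Prod.ext ?_ ?_
      · show qmk k n f (∏ j ∈ Finset.range (m+2), f j) (toR k n f (f m) * toR k n f u) =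
          qmk k n f (∏ j ∈ Finset.range (m+2), f j) (toR k n f s)
        rw [← _root_.map_mul, hsu]
      · show qmk k n f P (toR k n f u) = qmk k n f P (toR k n f t)
        refine Ideal.Quotient.eq.mpr ?_
        rw [← map_sub]
        exact (aux_mem_span_iff hPF).mpr ⟨-w, by rw [hu]; ring⟩

theorem statement4 (k : Type) [Field k] [Infinite k]
    (n : ℕ) (hn : 1 ≤ n) (f : ℕ → PSring k)
    (hmem : ∀ i < n, f i ∈ mxy k)
    (hirr : ∀ i < n, Irreducible (f i))
    (hdist : ∀ i < n, ∀ j < n, i ≠ j →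
      (Ideal.span {f i} : Ideal (PSring k)) ≠ Ideal.span {f j})
    (i : ℕ) (hi1 : 1 ≤ i) (hi2 : i < n) :
    ∃ (α : Qmod k n f ((∏ j ∈ Finset.range (i - 1), f j) * f i) →ₗ[Rring k n f]
        Smod k n f (i + 1) × Smod k n f (i - 1))
      (β : Smod k n f (i + 1) × Smod k n f (i - 1) →ₗ[Rring k n f] Smod k n f i),
      (∀ r : Rring k n f,
        α (qmk k n f ((∏ j ∈ Finset.range (i - 1), f j) * f i) r) =
          (qmk k n f (∏ j ∈ Finset.range (i + 1), f j) (toR k n f (f (i - 1)) * r),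
           qmk k n f (∏ j ∈ Finset.range (i - 1), f j) r)) ∧
      (∀ r r' : Rring k n f,
        β (qmk k n f (∏ j ∈ Finset.range (i + 1), f j) r,
           qmk k n f (∏ j ∈ Finset.range (i - 1), f j) r') =
          - qmk k n f (∏ j ∈ Finset.range i, f j) r +
          qmk k n f (∏ j ∈ Finset.range i, f j) (toR k n f (f (i - 1)) * r')) ∧
      Function.Injective α ∧ Function.Surjective β ∧
      LinearMap.range α = LinearMap.ker β := by
  obtain ⟨m, rfl⟩ : ∃ m, i = m + 1 := ⟨i - 1, (Nat.succ_pred_eq_of_pos hi1).symm⟩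
  exact helper_statement4 k n f hirr m hi2
end

section
/- Suppose f_{n+1} ∈ m satisfies (f_n, f_{n+1}) = m and f_{n+1} is relatively prime to f = f_1⋯f_n (every common divisor is a unit). Then the sequence 0 → S_{n−1} → S_n ⊕ S_{n−1} → S_n, where the first map sends t to (f_n·t, −f_{n+1}·t) and the second map sends (s,t) to f_{n+1}·s + f_n·t, is exact (the first map is injective and its image equals the kernel of the second map); moreover the second map is right almost split in add(⊕_{i=1}^n S_i): every R-linear map h : S_j → S_n (for any 1 ≤ j ≤ n) that is not a split epimorphism factors through it. -/
set_option synthInstance.maxHeartbeats 1000000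
set_option maxHeartbeats 1000000

section AuxPS
open MvPowerSeries
variable (k : Type) [Field k]


lemma fin2_eq_single (m : Fin 2 →₀ ℕ) (hm : m 0 = 0) : m = Finsupp.single 1 (m 1) := by
  ext i
  fin_cases i
  · simpa [Finsupp.single_apply] using hm
  · simp

/-- projection killing X 0 -/
noncomputable def projY : PSring k →+* PowerSeries k where
  toFun g := PowerSeries.mk fun p => MvPowerSeries.coeff (Finsupp.single 1 p) g
  map_one' := by
    ext p
    simp [MvPowerSeries.coeff_one, Finsupp.single_eq_zero, PowerSeries.coeff_one]
  map_zero' := by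
    ext p; simp
  map_add' a b := by
    ext p; simp
  map_mul' a b := by
    ext p
    rw [PowerSeries.coeff_mk, PowerSeries.coeff_mul, MvPowerSeries.coeff_mul,
      Finsupp.antidiagonal_single, Finset.sum_map]
    simp [PowerSeries.coeff_mk]

lemma projY_eq_zero_iff (g : PSring k) : projY k g = 0 ↔ (X 0 : PSring k) ∣ g := by
  constructor
  · intro h
    rw [MvPowerSeries.X_dvd_iff]
    intro m hm
    rw [fin2_eq_single m hm]
    have := congrArg (PowerSeries.coeff (m 1)) h
    simpa [projY] using this
  · intro h
    rw [MvPowerSeries.X_dvd_iff] at h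
    ext p
    simp only [projY, PowerSeries.coeff_mk, RingHom.coe_mk, MonoidHom.coe_mk, OneHom.coe_mk,
      map_zero]
    exact h _ (by simp [Finsupp.single_apply])

lemma X0_prime : Prime (X 0 : PSring k) := by
  refine ⟨?_, ?_, ?_⟩
  · intro h
    have := congrArg (MvPowerSeries.coeff (Finsupp.single 0 1)) h
    simp [MvPowerSeries.coeff_X] at this
  · intro h
    have := MvPowerSeries.isUnit_iff_constantCoeff.mp h
    simp at this
  · intro a b hab
    have : projY k a * projY k b = 0 := by
      rw [← map_mul, projY_eq_zero_iff]; exact hab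
    rcases mul_eq_zero.mp this with h | h
    · exact Or.inl ((projY_eq_zero_iff k a).mp h)
    · exact Or.inr ((projY_eq_zero_iff k b).mp h)

lemma mem_mxy_of_constantCoeff (g : PSring k) (hg : constantCoeff g = 0) :
    g ∈ mxy k := by
  let g1 : PSring k := fun m => if m 0 = 0 then MvPowerSeries.coeff m g else 0
  have hcoeff : ∀ m, MvPowerSeries.coeff m g1 = if m 0 = 0 then MvPowerSeries.coeff m g else 0 :=
    fun m => rfl
  have h0 : (X 0 : PSring k) ∣ g - g1 := by
    rw [MvPowerSeries.X_dvd_iff]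
    intro m hm
    rw [map_sub, hcoeff, if_pos hm, sub_self]
  have h1 : (X 1 : PSring k) ∣ g1 := by
    rw [MvPowerSeries.X_dvd_iff]
    intro m hm
    rw [hcoeff]
    split_ifs with h
    · have : m = 0 := by
        ext i; fin_cases i <;> simpa
      rw [this]
      simpa [MvPowerSeries.coeff_zero_eq_constantCoeff] using hg
    · rfl
  obtain ⟨u, hu⟩ := h0
  obtain ⟨v, hv⟩ := h1
  rw [Ideal.mem_span_pair]
  exact ⟨u, v, by rw [mul_comm u, mul_comm v, ← hu, ← hv]; ring⟩

lemma X0_not_dvd_X1 : ¬ (X 0 : PSring k) ∣ X 1 := by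
  rw [MvPowerSeries.X_dvd_iff]
  push_neg
  refine ⟨Finsupp.single 1 1, by simp [Finsupp.single_apply], ?_⟩
  rw [MvPowerSeries.coeff_X, if_pos rfl]
  exact one_ne_zero

lemma euclid (Q g s : PSring k) (hQ0 : Q ≠ 0)
    (hmax : Ideal.span {Q, g} = mxy k) (h : Q ∣ g * s) : Q ∣ s := by
  obtain ⟨w, hw⟩ := h
  have hX0 : (X 0 : PSring k) ∈ Ideal.span {Q, g} := by
    rw [hmax]; exact Ideal.subset_span (by simp)
  have hX1 : (X 1 : PSring k) ∈ Ideal.span {Q, g} := by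
    rw [hmax]; exact Ideal.subset_span (by simp)
  obtain ⟨u, v, huv⟩ := Ideal.mem_span_pair.mp hX0
  obtain ⟨u', v', huv'⟩ := Ideal.mem_span_pair.mp hX1
  have e0 : (X 0 : PSring k) * s = Q * (u * s + v * w) := by
    calc (X 0 : PSring k) * s = (u * Q + v * g) * s := by rw [huv]
    _ = Q * (u * s) + v * (g * s) := by ring
    _ = Q * (u * s) + v * (Q * w) := by rw [hw]
    _ = Q * (u * s + v * w) := by ring
  have e1 : (X 1 : PSring k) * s = Q * (u' * s + v' * w) := by
    calc (X 1 : PSring k) * s = (u' * Q + v' * g) * s := by rw [huv']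
    _ = Q * (u' * s) + v' * (g * s) := by ring
    _ = Q * (u' * s) + v' * (Q * w) := by rw [hw]
    _ = Q * (u' * s + v' * w) := by ring
  have key : Q * ((X 1 : PSring k) * (u * s + v * w)) = Q * ((X 0) * (u' * s + v' * w)) := by
    calc Q * ((X 1 : PSring k) * (u * s + v * w)) = (X 1) * (Q * (u * s + v * w)) := by ring
    _ = (X 1) * ((X 0) * s) := by rw [e0]
    _ = (X 0) * ((X 1) * s) := by ring
    _ = (X 0) * (Q * (u' * s + v' * w)) := by rw [e1]
    _ = Q * ((X 0) * (u' * s + v' * w)) := by ring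
  have key2 : (X 1 : PSring k) * (u * s + v * w) = (X 0) * (u' * s + v' * w) :=
    mul_left_cancel₀ hQ0 key
  have hdvd : (X 0 : PSring k) ∣ (X 1) * (u * s + v * w) := ⟨_, key2⟩
  rcases (X0_prime k).2.2 _ _ hdvd with hh | hh
  · exact absurd hh (X0_not_dvd_X1 k)
  · obtain ⟨z, hz⟩ := hh
    refine ⟨z, mul_left_cancel₀ (X0_prime k).ne_zero ?_⟩
    rw [e0, hz]; ring

end AuxPS

noncomputable def mulLin {R : Type*} [CommRing R] (c : R) : R →ₗ[R] R where
  toFun x := c * x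
  map_add' := mul_add c
  map_smul' m x := by simp only [smul_eq_mul, RingHom.id_apply]; ring

@[simp] lemma mulLin_apply {R : Type*} [CommRing R] (c x : R) : mulLin c x = c * x := rfl

section Main
variable (k : Type) [Field k] (m : ℕ) (f : ℕ → PSring k)

local notation "S" => PSring k
local notation "R" => Rring k (m+1) f
local notation "π" => toR k (m+1) f
local notation "F" => (∏ j ∈ Finset.range (m+1), f j)
local notation "P" => (∏ j ∈ Finset.range m, f j)
local notation "I" => (Ideal.span {(toR k (m+1) f) (∏ j ∈ Finset.range m, f j)} : Ideal (Rring k (m+1) f))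
local notation "J" => (Ideal.span {(toR k (m+1) f) (∏ j ∈ Finset.range (m+1), f j)} : Ideal (Rring k (m+1) f))

lemma hFzero : π F = 0 := Ideal.Quotient.eq_zero_iff_mem.mpr (Ideal.subset_span rfl)

lemma hmem_iff (a b : S) : π a ∈ Ideal.span {π b} ↔ ∃ u v : S, a = b * u + F * v := by
  constructor
  · intro hab
    obtain ⟨c, hc⟩ := Ideal.mem_span_singleton.mp hab
    obtain ⟨c0, rfl⟩ := Ideal.Quotient.mk_surjective c
    rw [← map_mul] at hc
    obtain ⟨v, hv⟩ := Ideal.mem_span_singleton.mp (Ideal.Quotient.eq.mp hc)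
    exact ⟨c0, v, by rw [← hv]; ring⟩
  · rintro ⟨u, v, rfl⟩
    rw [map_add, map_mul, map_mul, hFzero, zero_mul, add_zero]
    exact Ideal.mem_span_singleton.mpr (dvd_mul_right _ _)

lemma hαker (f' : PSring k) : (I : Submodule R R) ≤ LinearMap.ker
    ((((J : Ideal R).mkQ.comp (mulLin (π (f m)))).prod
      (-((I : Ideal R).mkQ.comp (mulLin (π f'))))) :
      R →ₗ[R] (R ⧸ J) × (R ⧸ I)) := by
  rw [Ideal.span_le]
  rintro x rfl
  rw [SetLike.mem_coe, LinearMap.mem_ker]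
  have h1 : π (f m) * π P ∈ J := by
    rw [← map_mul]
    exact (hmem_iff k m f _ _).mpr ⟨1, 0, by rw [Finset.prod_range_succ]; ring⟩
  have h2 : π f' * π P ∈ I := by
    rw [← map_mul]
    exact (hmem_iff k m f _ _).mpr ⟨f', 0, by ring⟩
  ext
  · simpa using (Submodule.Quotient.mk_eq_zero _).mpr h1
  · simpa using (Submodule.Quotient.mk_eq_zero _).mpr h2

lemma hβker1 (f' : PSring k) :
    (J : Submodule R R) ≤ LinearMap.ker ((J : Ideal R).mkQ.comp (mulLin (π f'))) := by
  rw [Ideal.span_le]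
  rintro x rfl
  rw [SetLike.mem_coe, LinearMap.mem_ker]
  rw [LinearMap.comp_apply, mulLin_apply, hFzero k m f, mul_zero, map_zero]

lemma hβker2 :
    (I : Submodule R R) ≤ LinearMap.ker ((J : Ideal R).mkQ.comp (mulLin (π (f m)))) := by
  rw [Ideal.span_le]
  rintro x rfl
  rw [SetLike.mem_coe, LinearMap.mem_ker]
  have h1 : π (f m) * π P ∈ J := by
    rw [← map_mul]
    exact (hmem_iff k m f _ _).mpr ⟨1, 0, by rw [Finset.prod_range_succ]; ring⟩
  simpa using (Submodule.Quotient.mk_eq_zero _).mpr h1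

noncomputable def alphaMap (f' : PSring k) :
    (R ⧸ (I : Submodule R R)) →ₗ[R] (R ⧸ (J : Submodule R R)) × (R ⧸ (I : Submodule R R)) :=
  Submodule.liftQ I ((((J : Ideal R).mkQ.comp (mulLin (π (f m)))).prod
    (-((I : Ideal R).mkQ.comp (mulLin (π f')))))) (hαker k m f f')

noncomputable def betaMap (f' : PSring k) :
    ((R ⧸ (J : Submodule R R)) × (R ⧸ (I : Submodule R R))) →ₗ[R] (R ⧸ (J : Submodule R R)) :=
  (Submodule.liftQ J ((J : Ideal R).mkQ.comp (mulLin (π f'))) (hβker1 k m f f')).coprod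
    (Submodule.liftQ I ((J : Ideal R).mkQ.comp (mulLin (π (f m)))) (hβker2 k m f))

lemma alphaMap_apply (f' : PSring k) (r : R) :
    alphaMap k m f f' (Submodule.Quotient.mk r)
      = (Submodule.Quotient.mk (π (f m) * r), -(Submodule.Quotient.mk (π f' * r))) := by
  rw [alphaMap, Submodule.liftQ_apply]
  rfl

lemma betaMap_apply (f' : PSring k) (r r' : R) :
    betaMap k m f f' (Submodule.Quotient.mk r, Submodule.Quotient.mk r')
      = Submodule.Quotient.mk (π f' * r) + Submodule.Quotient.mk (π (f m) * r') := by
  rw [betaMap, LinearMap.coprod_apply, Submodule.liftQ_apply, Submodule.liftQ_apply]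
  rfl

lemma alpha_inj (f' : PSring k) (hQ0 : f m ≠ 0) : Function.Injective (alphaMap k m f f') := by
  rw [← LinearMap.ker_eq_bot, eq_bot_iff]
  intro x hx
  obtain ⟨r, rfl⟩ := Submodule.Quotient.mk_surjective _ x
  obtain ⟨c, rfl⟩ := Ideal.Quotient.mk_surjective r
  rw [LinearMap.mem_ker, alphaMap_apply] at hx
  have h1 := congrArg Prod.fst hx
  simp only [Prod.fst_zero] at h1
  rw [Submodule.Quotient.mk_eq_zero, ← map_mul] at h1
  obtain ⟨u, v, huv⟩ := (hmem_iff k m f _ _).mp h1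
  have hc : c = P * (u + v) := by
    apply mul_left_cancel₀ hQ0
    calc f m * c = F * u + F * v := huv
    _ = f m * (P * (u + v)) := by rw [Finset.prod_range_succ]; ring
  rw [Submodule.mem_bot, Submodule.Quotient.mk_eq_zero]
  exact (hmem_iff k m f _ _).mpr ⟨u + v, 0, by rw [hc]; ring⟩

lemma alpha_exact (f' : PSring k) (hQ0 : f m ≠ 0)
    (hmax : Ideal.span {f m, f'} = mxy k) :
    LinearMap.range (alphaMap k m f f') = LinearMap.ker (betaMap k m f f') := by
  apply le_antisymm
  · rintro x ⟨y, rfl⟩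
    obtain ⟨r, rfl⟩ := Submodule.Quotient.mk_surjective _ y
    rw [LinearMap.mem_ker, alphaMap_apply, ← Submodule.Quotient.mk_neg, betaMap_apply,
      ← Submodule.Quotient.mk_add,
      show π f' * (π (f m) * r) + π (f m) * -(π f' * r) = 0 by ring,
      Submodule.Quotient.mk_zero]
  · rintro ⟨x1, x2⟩ hx
    obtain ⟨r1, rfl⟩ := Submodule.Quotient.mk_surjective _ x1
    obtain ⟨r2, rfl⟩ := Submodule.Quotient.mk_surjective _ x2
    obtain ⟨s, rfl⟩ := Ideal.Quotient.mk_surjective r1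
    obtain ⟨t, rfl⟩ := Ideal.Quotient.mk_surjective r2
    rw [LinearMap.mem_ker, betaMap_apply, ← Submodule.Quotient.mk_add,
      Submodule.Quotient.mk_eq_zero] at hx
    have hx' : π (f' * s + f m * t) ∈ J := by
      rwa [map_add, map_mul, map_mul]
    obtain ⟨u, v, huv⟩ := (hmem_iff k m f _ _).mp hx'
    have hQdvd : f m ∣ f' * s := by
      refine ⟨P * (u + v) - t, ?_⟩
      calc f' * s = (F * u + F * v) - f m * t := by rw [← huv]; ring
      _ = f m * (P * (u + v) - t) := by rw [Finset.prod_range_succ]; ring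
    obtain ⟨s', hs'⟩ := euclid k (f m) f' s hQ0 hmax hQdvd
    have ht : f' * s' + t = P * (u + v) := by
      apply mul_left_cancel₀ hQ0
      calc f m * (f' * s' + t) = f' * (f m * s') + f m * t := by ring
      _ = f' * s + f m * t := by rw [← hs']
      _ = f m * (P * (u + v)) := by rw [huv, Finset.prod_range_succ]; ring
    refine ⟨Submodule.Quotient.mk (π s'), ?_⟩
    rw [alphaMap_apply]
    refine Prod.ext ?_ ?_
    · show Submodule.Quotient.mk (π (f m) * π s') = Submodule.Quotient.mk (π s)
      rw [← map_mul, ← hs']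
    · show -Submodule.Quotient.mk (π f' * π s') = Submodule.Quotient.mk (π t)
      rw [← Submodule.Quotient.mk_neg, Submodule.Quotient.eq]
      have heq : -(π f' * π s') - π t = -(π (f' * s' + t)) := by
        rw [map_add, map_mul]; ring
      rw [heq]
      exact neg_mem ((hmem_iff k m f _ _).mpr ⟨u + v, 0, by rw [ht]; ring⟩)

lemma betaMap_apply_zero (f' : PSring k) (r' : R) :
    betaMap k m f f' ((0 : R ⧸ (J : Submodule R R)), Submodule.Quotient.mk r')
      = Submodule.Quotient.mk (π (f m) * r') := by
  rw [betaMap, LinearMap.coprod_apply, map_zero, zero_add, Submodule.liftQ_apply]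
  rfl

lemma almost_split (f' : PSring k) (hmax : Ideal.span {f m, f'} = mxy k)
    (hnz : ∀ i, i < m + 1 → f i ≠ 0) (jdx : ℕ) (hjdxn : jdx ≤ m + 1)
    (h : (R ⧸ (Ideal.span {π (∏ i ∈ Finset.range jdx, f i)} : Submodule R R))
      →ₗ[R] (R ⧸ (J : Submodule R R)))
    (hns : ¬ ∃ σ : (R ⧸ (J : Submodule R R)) →ₗ[R]
        (R ⧸ (Ideal.span {π (∏ i ∈ Finset.range jdx, f i)} : Submodule R R)),
        h ∘ₗ σ = LinearMap.id) :
    ∃ g : (R ⧸ (Ideal.span {π (∏ i ∈ Finset.range jdx, f i)} : Submodule R R))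
      →ₗ[R] (R ⧸ (J : Submodule R R)) × (R ⧸ (I : Submodule R R)),
      (betaMap k m f f') ∘ₗ g = h := by
  obtain ⟨r0, hr0⟩ := Submodule.Quotient.mk_surjective _ (h (Submodule.Quotient.mk 1))
  obtain ⟨c, hc0⟩ := Ideal.Quotient.mk_surjective r0
  rw [← hc0] at hr0
  have key : ∀ x : R, h (Submodule.Quotient.mk x) = Submodule.Quotient.mk (x * π c) := by
    intro x
    have hx1 : (Submodule.Quotient.mk x :
        R ⧸ (Ideal.span {π (∏ i ∈ Finset.range jdx, f i)} : Submodule R R))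
        = x • Submodule.Quotient.mk 1 := by
      rw [← Submodule.Quotient.mk_smul, smul_eq_mul, mul_one]
    rw [hx1, map_smul, ← hr0, ← Submodule.Quotient.mk_smul, smul_eq_mul]
  rcases eq_or_lt_of_le hjdxn with heq | hlt
  · subst heq
    have hcnu : ¬ IsUnit c := by
      intro hcu
      obtain ⟨d, hd⟩ := hcu.exists_left_inv
      apply hns
      have hσker : (J : Submodule R R) ≤ LinearMap.ker
          ((Ideal.span {π (∏ i ∈ Finset.range (m+1), f i)} : Ideal R).mkQ.comp
            (mulLin (π d))) := by
        rw [Ideal.span_le]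
        rintro x rfl
        rw [SetLike.mem_coe, LinearMap.mem_ker, LinearMap.comp_apply, mulLin_apply,
          hFzero k m f, mul_zero, map_zero]
      refine ⟨Submodule.liftQ J ((Ideal.span {π (∏ i ∈ Finset.range (m+1), f i)} :
        Ideal R).mkQ.comp (mulLin (π d))) hσker, ?_⟩
      apply Submodule.linearMap_qext
      refine LinearMap.ext fun x => ?_
      simp only [LinearMap.comp_apply, Submodule.mkQ_apply, Submodule.liftQ_apply,
        mulLin_apply, LinearMap.id_apply]
      rw [key]
      congr 1
      calc π d * x * π c = x * π (d * c) := by rw [map_mul]; ring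
      _ = x := by rw [hd, map_one, mul_one]
    have hc0c : MvPowerSeries.constantCoeff c = 0 := by
      by_contra hne
      exact hcnu (MvPowerSeries.isUnit_iff_constantCoeff.mpr (isUnit_iff_ne_zero.mpr hne))
    have hcm : c ∈ Ideal.span {f m, f'} := by
      rw [hmax]; exact mem_mxy_of_constantCoeff k c hc0c
    obtain ⟨a, b, hab⟩ := Ideal.mem_span_pair.mp hcm
    have hgker : (J : Submodule R R) ≤ LinearMap.ker
        (((J : Ideal R).mkQ.comp (mulLin (π b))).prod
          ((I : Ideal R).mkQ.comp (mulLin (π a)))) := by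
      rw [Ideal.span_le]
      rintro x rfl
      rw [SetLike.mem_coe, LinearMap.mem_ker]
      have e1 : π b * π F = 0 := by rw [hFzero k m f, mul_zero]
      have e2 : π a * π F = 0 := by rw [hFzero k m f, mul_zero]
      ext
      · simp only [LinearMap.prod_apply, Function.prod, LinearMap.comp_apply, mulLin_apply,
          Submodule.mkQ_apply, Prod.fst_zero]
        rw [e1, Submodule.Quotient.mk_zero]
      · simp only [LinearMap.prod_apply, Function.prod, LinearMap.comp_apply, mulLin_apply,
          Submodule.mkQ_apply, Prod.snd_zero]
        rw [e2, Submodule.Quotient.mk_zero]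
    refine ⟨Submodule.liftQ J (((J : Ideal R).mkQ.comp (mulLin (π b))).prod
      ((I : Ideal R).mkQ.comp (mulLin (π a)))) hgker, ?_⟩
    apply Submodule.linearMap_qext
    refine LinearMap.ext fun x => ?_
    simp only [LinearMap.comp_apply, Submodule.mkQ_apply, Submodule.liftQ_apply,
      LinearMap.prod_apply, Function.prod, mulLin_apply]
    rw [key, betaMap_apply, ← Submodule.Quotient.mk_add]
    congr 1
    calc π f' * (π b * x) + π (f m) * (π a * x) = (π (a * f m + b * f')) * x := by
          rw [map_add, map_mul, map_mul]; ring
    _ = x * π c := by rw [hab]; ring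
  · have hjm : jdx ≤ m := Nat.lt_succ_iff.mp hlt
    have hcon : h (Submodule.Quotient.mk (π (∏ i ∈ Finset.range jdx, f i))) = 0 := by
      have : (Submodule.Quotient.mk (π (∏ i ∈ Finset.range jdx, f i)) :
          R ⧸ (Ideal.span {π (∏ i ∈ Finset.range jdx, f i)} : Submodule R R)) = 0 := by
        rw [Submodule.Quotient.mk_eq_zero]
        exact Ideal.subset_span rfl
      rw [this, map_zero]
    rw [key, Submodule.Quotient.mk_eq_zero, ← map_mul] at hcon
    obtain ⟨u, v, huv⟩ := (hmem_iff k m f _ _).mp hcon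
    have hPj0 : (∏ i ∈ Finset.range jdx, f i) ≠ 0 :=
      Finset.prod_ne_zero_iff.mpr fun i hi =>
        hnz i (lt_of_lt_of_le (Finset.mem_range.mp hi) hjdxn)
    have hcEQ : c = (∏ i ∈ Finset.Ico jdx m, f i) * f m * (u + v) := by
      apply mul_left_cancel₀ hPj0
      calc (∏ i ∈ Finset.range jdx, f i) * c = F * u + F * v := huv
      _ = ((∏ i ∈ Finset.range jdx, f i) * (∏ i ∈ Finset.Ico jdx (m+1), f i)) * (u + v) := by
          rw [Finset.prod_range_mul_prod_Ico f hjdxn]; ring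
      _ = (∏ i ∈ Finset.range jdx, f i) * ((∏ i ∈ Finset.Ico jdx m, f i) * f m * (u + v)) := by
          rw [Finset.prod_Ico_succ_top hjm]; ring
    have hgker : (Ideal.span {π (∏ i ∈ Finset.range jdx, f i)} : Submodule R R)
        ≤ LinearMap.ker ((0 : R →ₗ[R] R ⧸ (J : Submodule R R)).prod
          ((I : Ideal R).mkQ.comp (mulLin (π ((∏ i ∈ Finset.Ico jdx m, f i) * (u + v)))))) := by
      rw [Ideal.span_le]
      rintro x rfl
      rw [SetLike.mem_coe, LinearMap.mem_ker]
      ext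
      · simp
      · simp only [LinearMap.prod_apply, Function.prod, LinearMap.comp_apply, mulLin_apply,
          Submodule.mkQ_apply, Prod.snd_zero]
        rw [Submodule.Quotient.mk_eq_zero, ← map_mul]
        refine (hmem_iff k m f _ _).mpr ⟨u + v, 0, ?_⟩
        rw [← Finset.prod_range_mul_prod_Ico f hjm]; ring
    refine ⟨Submodule.liftQ _ ((0 : R →ₗ[R] R ⧸ (J : Submodule R R)).prod
      ((I : Ideal R).mkQ.comp (mulLin (π ((∏ i ∈ Finset.Ico jdx m, f i) * (u + v)))))) hgker, ?_⟩
    apply Submodule.linearMap_qext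
    refine LinearMap.ext fun x => ?_
    simp only [LinearMap.comp_apply, Submodule.mkQ_apply, Submodule.liftQ_apply,
      LinearMap.prod_apply, Function.prod, mulLin_apply, LinearMap.zero_apply]
    rw [key, betaMap_apply_zero]
    refine congrArg Submodule.Quotient.mk ?_
    calc π (f m) * (π ((∏ i ∈ Finset.Ico jdx m, f i) * (u + v)) * x)
        = π ((∏ i ∈ Finset.Ico jdx m, f i) * f m * (u + v)) * x := by
          rw [map_mul, map_mul, map_mul]; ring
    _ = x * π c := by rw [← hcEQ]; ring

end Main


theorem statement6 (k : Type) [Field k] [Infinite k]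
    (n : ℕ) (hn : 1 ≤ n) (f : ℕ → PSring k)
    (hmem : ∀ i < n, f i ∈ mxy k)
    (hirr : ∀ i < n, Irreducible (f i))
    (hdist : ∀ i < n, ∀ j < n, i ≠ j →
      (Ideal.span {f i} : Ideal (PSring k)) ≠ Ideal.span {f j})
    (f' : PSring k) (hf'm : f' ∈ mxy k)
    (hmax : (Ideal.span {f (n - 1), f'} : Ideal (PSring k)) = mxy k)
    (hcop : ∀ d : PSring k, d ∣ f' → d ∣ (∏ j ∈ Finset.range n, f j) → IsUnit d) :
    ∃ (α : Smod k n f (n - 1) →ₗ[Rring k n f] Smod k n f n × Smod k n f (n - 1))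
      (β : Smod k n f n × Smod k n f (n - 1) →ₗ[Rring k n f] Smod k n f n),
      (∀ r : Rring k n f,
        α (qmk k n f (∏ j ∈ Finset.range (n - 1), f j) r) =
          (qmk k n f (∏ j ∈ Finset.range n, f j) (toR k n f (f (n - 1)) * r),
           - qmk k n f (∏ j ∈ Finset.range (n - 1), f j) (toR k n f f' * r))) ∧
      (∀ r r' : Rring k n f,
        β (qmk k n f (∏ j ∈ Finset.range n, f j) r,
           qmk k n f (∏ j ∈ Finset.range (n - 1), f j) r') =
          qmk k n f (∏ j ∈ Finset.range n, f j) (toR k n f f' * r) +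
          qmk k n f (∏ j ∈ Finset.range n, f j) (toR k n f (f (n - 1)) * r')) ∧
      Function.Injective α ∧ LinearMap.range α = LinearMap.ker β ∧
      (∀ jdx : ℕ, 1 ≤ jdx → jdx ≤ n →
        ∀ h : Smod k n f jdx →ₗ[Rring k n f] Smod k n f n,
          (¬ ∃ σ : Smod k n f n →ₗ[Rring k n f] Smod k n f jdx,
              h ∘ₗ σ = LinearMap.id) →
          ∃ g : Smod k n f jdx →ₗ[Rring k n f] Smod k n f n × Smod k n f (n - 1),
            β ∘ₗ g = h) := by
  obtain ⟨m, rfl⟩ : ∃ m, n = m + 1 := ⟨n - 1, (Nat.succ_pred_eq_of_pos hn).symm⟩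
  simp only [Nat.add_sub_cancel] at hmax ⊢
  have hnz : ∀ i, i < m + 1 → f i ≠ 0 := fun i hi => (hirr i hi).ne_zero
  refine ⟨alphaMap k m f f', betaMap k m f f', ?_, ?_, ?_, ?_, ?_⟩
  · intro r
    exact alphaMap_apply k m f f' r
  · intro r r'
    exact betaMap_apply k m f f' r r'
  · exact alpha_inj k m f f' (hnz m (Nat.lt_succ_self m))
  · exact alpha_exact k m f f' (hnz m (Nat.lt_succ_self m)) hmax
  · intro jdx hjdx1 hjdxn h hns
    exact almost_split k m f f' hmax hnz jdx hjdxn h hns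
end
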